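/- Let 𝔛 be a Banach space, let 𝔛_∞ be the Banach space of bounded sequences (v_i)_{i≥1} in 𝔛 with norm ‖(v_i)‖ := sup_i ‖v_i‖, and let (α_i)_{i≥1} be a nonincreasing sequence in (0,1]. For L ∈ B(𝔛) define 𝔈(L) ∈ B(𝔛_∞) by (𝔈(L)v)_1 = L v_1 and (𝔈(L)v)_{i+1} = α_i v_i for i ≥ 1. Then 𝔈(L) is injective for every L ∈ B(𝔛), and for every n ∈ ℕ and all L_1, …, L_n ∈ B(𝔛) one has ‖𝔈(L_n)⋯𝔈(L_1)‖ = max_{0 ≤ k ≤ n} ( (∏_{i=1}^{k} α_i) · ‖L_{n−k}⋯L_1‖ ), where for k = n the product L_{n−k}⋯L_1 is interpreted as the identity operator and the empty product ∏_{i=1}^{0} α_i equals 1. -/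

import Mathlib

open Filter Topology

noncomputable section

variable {𝕏 : Type*} [NormedAddCommGroup 𝕏] [NormedSpace ℝ 𝕏] [CompleteSpace 𝕏]

/-- The Banach space `𝔛_∞ = ℓ^∞(ℕ, 𝔛)` of bounded sequences in `𝕏` with the sup norm. -/
abbrev SeqSpace (𝕏 : Type*) [NormedAddCommGroup 𝕏] : Type _ := lp (fun _ : ℕ => 𝕏) ⊤

/-- `IsExtOp α E` says that `E` is the map `𝔈 : B(𝔛) → B(𝔛_∞)` determined by
`(𝔈(L)v)_0 = L v_0` and `(𝔈(L)v)_{i+1} = α_i • v_i`. -/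
def IsExtOp (α : ℕ → ℝ)
    (E : (𝕏 →L[ℝ] 𝕏) → (SeqSpace 𝕏 →L[ℝ] SeqSpace 𝕏)) : Prop :=
  ∀ (L : 𝕏 →L[ℝ] 𝕏) (v : SeqSpace 𝕏),
    (E L v) 0 = L (v 0) ∧ ∀ i : ℕ, (E L v) (i + 1) = α i • v i

section Aux

/-- The underlying function of `𝔈(L)v`. -/
def extFun (α : ℕ → ℝ) (L : 𝕏 →L[ℝ] 𝕏) (v : SeqSpace 𝕏) : ∀ _ : ℕ, 𝕏 :=
  fun i => Nat.casesOn i (L (v 0)) (fun j => α j • v j)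

theorem extFun_memℓp (α : ℕ → ℝ) (hα : ∀ i, 0 < α i ∧ α i ≤ 1) (L : 𝕏 →L[ℝ] 𝕏)
    (v : SeqSpace 𝕏) : Memℓp (extFun α L v) ⊤ := by
  apply memℓp_infty
  refine ⟨max (‖L‖ * ‖v‖) ‖v‖, ?_⟩
  rintro x ⟨i, rfl⟩
  cases i with
  | zero =>
    refine le_max_of_le_left ?_
    exact (L.le_opNorm _).trans (by
      gcongr; exact lp.norm_apply_le_norm ENNReal.top_ne_zero v 0)
  | succ j =>
    refine le_max_of_le_right ?_
    have : ‖extFun α L v (j + 1)‖ = α j * ‖v j‖ := by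
      simp [extFun, norm_smul, abs_of_pos (hα j).1]
    calc ‖extFun α L v (j + 1)‖ = α j * ‖v j‖ := this
    _ ≤ 1 * ‖v j‖ := by gcongr; exact (hα j).2
    _ = ‖v j‖ := one_mul _
    _ ≤ ‖v‖ := lp.norm_apply_le_norm ENNReal.top_ne_zero v j

/-- The extension operator `𝔈(L)`. -/
def extOp (α : ℕ → ℝ) (hα : ∀ i, 0 < α i ∧ α i ≤ 1) (L : 𝕏 →L[ℝ] 𝕏) :
    SeqSpace 𝕏 →L[ℝ] SeqSpace 𝕏 :=
  LinearMap.mkContinuous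
    { toFun := fun v => ⟨extFun α L v, extFun_memℓp α hα L v⟩
      map_add' := fun v w => by
        ext i
        cases i with
        | zero => simp [extFun, Pi.add_apply]; rfl
        | succ j => simp [extFun, Pi.add_apply, smul_add]; rfl
      map_smul' := fun c v => by
        ext i
        cases i with
        | zero => simp [extFun, Pi.smul_apply]
        | succ j => simp [extFun, Pi.smul_apply, smul_comm c] }
    (max ‖L‖ 1)
    (by
      intro v
      refine lp.norm_le_of_forall_le (by positivity) fun i => ?_
      cases i with
      | zero =>
        calc ‖extFun α L v 0‖ = ‖L (v 0)‖ := rfl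
        _ ≤ ‖L‖ * ‖v 0‖ := L.le_opNorm _
        _ ≤ max ‖L‖ 1 * ‖v‖ := by
            gcongr
            · exact le_max_left _ _
            · exact lp.norm_apply_le_norm ENNReal.top_ne_zero v 0
      | succ j =>
        have h1 : ‖extFun α L v (j + 1)‖ = α j * ‖v j‖ := by
          simp [extFun, norm_smul, abs_of_pos (hα j).1]
        calc ‖extFun α L v (j + 1)‖ = α j * ‖v j‖ := h1
        _ ≤ 1 * ‖v‖ := by
              refine mul_le_mul (hα j).2 ?_ (norm_nonneg _) zero_le_one
              exact lp.norm_apply_le_norm ENNReal.top_ne_zero v j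
        _ ≤ max ‖L‖ 1 * ‖v‖ := by gcongr; exact le_max_right _ _)

theorem extOp_isExtOp (α : ℕ → ℝ) (hα : ∀ i, 0 < α i ∧ α i ≤ 1) :
    IsExtOp α (extOp (𝕏 := 𝕏) α hα) :=
  fun _ _ => ⟨rfl, fun _ => rfl⟩

/-- The key pointwise formula for a product of extension operators. -/
theorem extOp_prod_apply {α : ℕ → ℝ} {E : (𝕏 →L[ℝ] 𝕏) → (SeqSpace 𝕏 →L[ℝ] SeqSpace 𝕏)}
    (hE : IsExtOp α E) (Ls : List (𝕏 →L[ℝ] 𝕏)) (v : SeqSpace 𝕏) (j : ℕ) :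
    ((Ls.map E).prod v) j =
      (∏ i ∈ Finset.Ico (j - Ls.length) j, α i) • ((Ls.drop j).prod (v (j - Ls.length))) := by
  induction Ls generalizing v j with
  | nil => simp
  | cons L T ih =>
    have hQ : (((L :: T).map E).prod : SeqSpace 𝕏 →L[ℝ] SeqSpace 𝕏)
        = E L * (T.map E).prod := by simp
    rw [hQ]
    cases j with
    | zero =>
      have h0 := (hE L ((T.map E).prod v)).1
      simp only [ContinuousLinearMap.mul_apply] at h0 ⊢
      rw [h0, ih v 0]
      simp
    | succ i =>
      have h1 := (hE L ((T.map E).prod v)).2 i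
      simp only [ContinuousLinearMap.mul_apply] at h1 ⊢
      rw [h1, ih v i]
      have hsub : i + 1 - (T.length + 1) = i - T.length := Nat.succ_sub_succ _ _
      simp only [List.length_cons, List.drop_succ_cons, hsub]
      rw [smul_smul, mul_comm (α i), ← Finset.prod_Ico_succ_top (Nat.sub_le i T.length)]

end Aux

/-- The operator `𝔈(L)` on `𝔛_∞` exists, is injective for every `L`, and the norms of products
of such operators satisfy
`‖𝔈(L_n)⋯𝔈(L_1)‖ = max_{0 ≤ k ≤ n} (∏_{i=1}^k α_i) ‖L_{n-k}⋯L_1‖`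
(with `L_{n-k}⋯L_1 = I` when `k = n` and the empty product of `α`'s equal to `1`). -/
theorem extension_operator_norm (α : ℕ → ℝ)
    (hα : ∀ i, 0 < α i ∧ α i ≤ 1) (hanti : Antitone α) :
    (∃ E : (𝕏 →L[ℝ] 𝕏) → (SeqSpace 𝕏 →L[ℝ] SeqSpace 𝕏), IsExtOp α E) ∧
    ∀ E : (𝕏 →L[ℝ] 𝕏) → (SeqSpace 𝕏 →L[ℝ] SeqSpace 𝕏), IsExtOp α E →
      (∀ L : 𝕏 →L[ℝ] 𝕏, Function.Injective (E L)) ∧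
      ∀ Ls : List (𝕏 →L[ℝ] 𝕏),
        ‖(Ls.map E).prod‖ =
          (Finset.range (Ls.length + 1)).sup' Finset.nonempty_range_add_one
            (fun k => (∏ i ∈ Finset.range k, α i) * ‖(Ls.drop k).prod‖) := by
  constructor
  · exact ⟨extOp α hα, extOp_isExtOp α hα⟩
  intro E hE
  constructor
  · -- injectivity
    intro L v w h
    ext i
    have h1 := (hE L v).2 i
    have h2 := (hE L w).2 i
    rw [h, h2] at h1
    exact smul_right_injective 𝕏 (hα i).1.ne' h1.symm
  · intro Ls
    set n := Ls.length with hn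
    set RHS := (Finset.range (n + 1)).sup' Finset.nonempty_range_add_one
      (fun k => (∏ i ∈ Finset.range k, α i) * ‖(Ls.drop k).prod‖) with hRHS
    have hαnn : ∀ i, (0:ℝ) ≤ α i := fun i => (hα i).1.le
    have hleR : ∀ k, k ≤ n →
        (∏ i ∈ Finset.range k, α i) * ‖(Ls.drop k).prod‖ ≤ RHS := by
      intro k hk
      rw [hRHS]
      exact Finset.le_sup' (fun k => (∏ i ∈ Finset.range k, α i) * ‖(Ls.drop k).prod‖)
        (Finset.mem_range.mpr (Nat.lt_succ_of_le hk))
    have hRHS_nonneg : 0 ≤ RHS :=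
      le_trans (by positivity) (hleR 0 (Nat.zero_le n))
    apply le_antisymm
    · refine ContinuousLinearMap.opNorm_le_bound _ hRHS_nonneg fun v => ?_
      refine lp.norm_le_of_forall_le (by positivity) fun j => ?_
      rw [extOp_prod_apply hE Ls v j, norm_smul, Real.norm_eq_abs,
        abs_of_nonneg (Finset.prod_nonneg fun i _ => hαnn i)]
      rcases le_or_gt j n with hj | hj
      · have h0 : j - n = 0 := Nat.sub_eq_zero_of_le hj
        rw [h0, (Finset.range_eq_Ico j).symm]
        calc (∏ i ∈ Finset.range j, α i) * ‖(Ls.drop j).prod (v 0)‖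
            ≤ (∏ i ∈ Finset.range j, α i) * (‖(Ls.drop j).prod‖ * ‖v 0‖) := by
              gcongr
              · exact Finset.prod_nonneg fun i _ => hαnn i
              · exact ContinuousLinearMap.le_opNorm _ _
          _ = ((∏ i ∈ Finset.range j, α i) * ‖(Ls.drop j).prod‖) * ‖v 0‖ := by ring
          _ ≤ RHS * ‖v‖ := by
              refine mul_le_mul (hleR j hj) ?_ (norm_nonneg _) hRHS_nonneg
              exact lp.norm_apply_le_norm ENNReal.top_ne_zero v 0
      · -- j > n
        have hdrop : Ls.drop j = [] := List.drop_eq_nil_of_le (by omega)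
        rw [hdrop]
        simp only [List.prod_nil]
        have hprodle : (∏ i ∈ Finset.Ico (j - n) j, α i) ≤ ∏ i ∈ Finset.range n, α i := by
          rw [Finset.prod_Ico_eq_prod_range, show j - (j - n) = n by omega]
          exact Finset.prod_le_prod (fun i _ => hαnn _)
            (fun i _ => hanti (Nat.le_add_left i (j - n)))
        calc (∏ i ∈ Finset.Ico (j - n) j, α i) * ‖(1 : 𝕏 →L[ℝ] 𝕏) (v (j - n))‖
            ≤ (∏ i ∈ Finset.range n, α i) * (‖(1 : 𝕏 →L[ℝ] 𝕏)‖ * ‖v (j - n)‖) :=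
              mul_le_mul hprodle (ContinuousLinearMap.le_opNorm _ _) (norm_nonneg _)
                (Finset.prod_nonneg fun i _ => hαnn i)
          _ = ((∏ i ∈ Finset.range n, α i) * ‖(1 : 𝕏 →L[ℝ] 𝕏)‖) * ‖v (j - n)‖ := by ring
          _ ≤ RHS * ‖v‖ := by
              refine mul_le_mul ?_ (lp.norm_apply_le_norm ENNReal.top_ne_zero v _)
                (norm_nonneg _) hRHS_nonneg
              have := hleR n le_rfl
              rwa [List.drop_length, List.prod_nil] at this
    · rw [hRHS]
      refine Finset.sup'_le _ _ fun k hk => ?_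
      rw [Finset.mem_range, Nat.lt_succ_iff] at hk
      have hc : 0 < ∏ i ∈ Finset.range k, α i := Finset.prod_pos fun i _ => (hα i).1
      rw [mul_comm, ← le_div_iff₀ hc]
      refine ContinuousLinearMap.opNorm_le_bound _ (by positivity) fun x => ?_
      set v : SeqSpace 𝕏 := lp.single ⊤ 0 x with hv
      have hvk : v 0 = x := by rw [hv]; exact lp.single_apply_self (E := fun _ : ℕ => 𝕏) ⊤ 0 x
      have hvnorm : ‖v‖ ≤ ‖x‖ := by
        refine lp.norm_le_of_forall_le (norm_nonneg x) fun i => ?_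
        rcases eq_or_ne i 0 with rfl | hi
        · rw [hvk]
        · rw [hv, lp.single_apply_ne (E := fun _ : ℕ => 𝕏) ⊤ 0 x hi]; simp
      have happ := extOp_prod_apply hE Ls v k
      rw [Nat.sub_eq_zero_of_le hk, hvk] at happ
      have h1 : (∏ i ∈ Finset.range k, α i) * ‖(Ls.drop k).prod x‖ ≤ ‖(Ls.map E).prod‖ * ‖x‖ := by
        calc (∏ i ∈ Finset.range k, α i) * ‖(Ls.drop k).prod x‖
            = ‖((Ls.map E).prod v) k‖ := by
              rw [happ, norm_smul, Real.norm_eq_abs, ← Finset.range_eq_Ico k, abs_of_pos hc]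
          _ ≤ ‖(Ls.map E).prod v‖ := lp.norm_apply_le_norm ENNReal.top_ne_zero _ _
          _ ≤ ‖(Ls.map E).prod‖ * ‖v‖ := ContinuousLinearMap.le_opNorm _ _
          _ ≤ ‖(Ls.map E).prod‖ * ‖x‖ := by gcongr
      rw [div_mul_eq_mul_div, le_div_iff₀ hc, mul_comm]
      exact h1
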